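/- arXiv:2502.21008 — 2 statements merged into one kernel-verified Lean document; each statement's English description precedes it below -/
import Mathlib

section
/- For 0 < x ≤ y and m ∈ ℕ with m ≥ 1 and y ≤ m, the Bessel function of the first kind satisfies J_m(x) ≤ e^{y−x}·(x/y)^m·J_m(y). -/
open Set Filter Topology

/-- The Bessel function of the first kind of nonnegative integer order `m`,
defined by its power series. -/
noncomputable def besselJ (m : ℕ) (x : ℝ) : ℝ :=
  ∑' k : ℕ, (-1 : ℝ) ^ k * (x / 2) ^ (m + 2 * k) /
    ((Nat.factorial k * Nat.factorial (m + k) : ℕ) : ℝ)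

/-- Auxiliary entire function: `besF m t = ∑ (-1)^k t^k / (k! (m+k)!)`,
so that `besselJ m x = (x/2)^m * besF m (x^2/4)`. -/
noncomputable def besF (m : ℕ) (t : ℝ) : ℝ :=
  ∑' k : ℕ, (-1 : ℝ) ^ k * t ^ k / ((Nat.factorial k * Nat.factorial (m + k) : ℕ) : ℝ)

lemma besF_den_pos (m k : ℕ) : (0:ℝ) < ((Nat.factorial k * Nat.factorial (m + k) : ℕ) : ℝ) := by
  positivity

lemma summable_besF (m : ℕ) (t : ℝ) :
    Summable (fun k : ℕ => (-1 : ℝ) ^ k * t ^ k /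
      ((Nat.factorial k * Nat.factorial (m + k) : ℕ) : ℝ)) := by
  apply Summable.of_norm_bounded (Real.summable_pow_div_factorial |t|)
  intro k
  have h1 : (0:ℝ) < (Nat.factorial k : ℝ) := by positivity
  have h2 : (1:ℝ) ≤ (Nat.factorial (m + k) : ℝ) := by
    exact_mod_cast Nat.one_le_iff_ne_zero.2 (Nat.factorial_ne_zero _)
  rw [norm_div, norm_mul, norm_pow, norm_pow]
  simp only [norm_neg, norm_one, one_pow, one_mul, Real.norm_eq_abs, Nat.abs_cast]
  rw [Nat.cast_mul]
  calc |t| ^ k / ((Nat.factorial k : ℝ) * (Nat.factorial (m + k) : ℝ))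
      ≤ |t| ^ k / ((Nat.factorial k : ℝ) * 1) := by
        apply div_le_div_of_nonneg_left (by positivity) (by positivity)
        exact mul_le_mul_of_nonneg_left h2 h1.le
    _ = |t| ^ k / (Nat.factorial k : ℝ) := by rw [mul_one]
    _ = |t| ^ k / (Nat.factorial k : ℝ) := rfl

lemma hasSum_besF (m : ℕ) (t : ℝ) :
    HasSum (fun k : ℕ => (-1 : ℝ) ^ k * t ^ k /
      ((Nat.factorial k * Nat.factorial (m + k) : ℕ) : ℝ)) (besF m t) :=
  (summable_besF m t).hasSum

lemma besF_zero (m : ℕ) : besF m 0 = 1 / (Nat.factorial m : ℝ) := by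
  rw [besF, tsum_eq_single 0]
  · simp
  · intro k hk
    simp [zero_pow hk]

-- derivative sum identification
lemma hasSum_besF_deriv (m : ℕ) (t : ℝ) :
    HasSum (fun k : ℕ => (-1 : ℝ) ^ k * ((k : ℝ) * t ^ (k - 1)) /
      ((Nat.factorial k * Nat.factorial (m + k) : ℕ) : ℝ)) (-besF (m+1) t) := by
  have h := (hasSum_besF (m+1) t).neg
  have h2 : HasSum (fun k : ℕ => (-1 : ℝ) ^ (k+1) * (((k:ℝ)+1) * t ^ k) /
      ((Nat.factorial (k+1) * Nat.factorial (m + (k+1)) : ℕ) : ℝ)) (-besF (m+1) t) := by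
    refine h.congr_fun fun k => ?_
    have e1 : m + (k + 1) = m + 1 + k := by ring
    rw [e1]
    have hfk : ((Nat.factorial (k+1) : ℕ) : ℝ) = ((k:ℝ)+1) * (Nat.factorial k : ℝ) := by
      push_cast [Nat.factorial_succ]; ring
    push_cast [Nat.factorial_succ]
    field_simp
    ring
  have h2' : HasSum (fun k : ℕ => (-1 : ℝ) ^ (k+1) * (((k:ℝ)+1) * t ^ ((k+1) - 1)) /
      ((Nat.factorial (k+1) * Nat.factorial (m + (k+1)) : ℕ) : ℝ)) (-besF (m+1) t) := by
    refine h2.congr_fun fun k => ?_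
    simp only [Nat.add_sub_cancel]
  have h3 := (hasSum_nat_add_iff (f := fun k : ℕ => (-1 : ℝ) ^ k * ((k : ℝ) * t ^ (k - 1)) /
      ((Nat.factorial k * Nat.factorial (m + k) : ℕ) : ℝ)) 1).mp (by
    refine h2'.congr_fun fun k => ?_
    push_cast
    ring_nf)
  rw [Finset.sum_range_one] at h3
  simpa using h3

lemma summable_bound (R : ℝ) (m : ℕ) :
    Summable (fun k : ℕ => if k = 0 then (0:ℝ) else R ^ (k-1) / (Nat.factorial (k-1) : ℝ)) := by
  rw [← summable_nat_add_iff 1]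
  simp only [Nat.add_sub_cancel, Nat.succ_ne_zero, if_false]
  exact Real.summable_pow_div_factorial R

lemma hasDerivAt_besF (m : ℕ) (t : ℝ) :
    HasDerivAt (besF m) (-besF (m+1) t) t := by
  set R : ℝ := |t| + 1 with hR
  have hRpos : 0 < R := by positivity
  have htmem : t ∈ Metric.ball (0:ℝ) R := by
    rw [Metric.mem_ball, Real.dist_eq, sub_zero, hR]; linarith
  have h0mem : (0:ℝ) ∈ Metric.ball (0:ℝ) R := by simp [hRpos]
  have key := hasDerivAt_tsum_of_isPreconnected
    (u := fun k : ℕ => if k = 0 then (0:ℝ) else R ^ (k-1) / (Nat.factorial (k-1) : ℝ))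
    (g := fun k : ℕ => fun z : ℝ => (-1 : ℝ) ^ k * z ^ k /
      ((Nat.factorial k * Nat.factorial (m + k) : ℕ) : ℝ))
    (g' := fun k : ℕ => fun z : ℝ => (-1 : ℝ) ^ k * ((k:ℝ) * z ^ (k-1)) /
      ((Nat.factorial k * Nat.factorial (m + k) : ℕ) : ℝ))
    (summable_bound R m) Metric.isOpen_ball (convex_ball 0 R).isPreconnected
    (fun k z _ => by
      simpa using (((hasDerivAt_pow k z)).const_mul ((-1:ℝ)^k)).div_const
        ((Nat.factorial k * Nat.factorial (m + k) : ℕ) : ℝ))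
    (fun k z hz => by
      rcases Nat.eq_zero_or_pos k with hk | hk
      · subst hk; simp
      · have hk0 : k ≠ 0 := hk.ne'
        simp only [hk0, if_false]
        have hz' : |z| ≤ R := by
          rw [Metric.mem_ball, Real.dist_eq, sub_zero] at hz; linarith
        have hden : ((Nat.factorial k * Nat.factorial (m + k) : ℕ) : ℝ) ≥ (Nat.factorial k : ℝ) := by
          have := Nat.factorial_pos (m+k)
          have h1 : Nat.factorial k ≤ Nat.factorial k * Nat.factorial (m+k) :=
            Nat.le_mul_of_pos_right _ this
          exact_mod_cast h1
        rw [norm_div, norm_mul, norm_pow]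
        simp only [norm_neg, norm_one, one_pow, one_mul, Real.norm_eq_abs, Nat.abs_cast]
        have habs : |(k:ℝ) * z ^ (k-1)| ≤ (k:ℝ) * R ^ (k-1) := by
          rw [abs_mul, abs_pow, Nat.abs_cast]
          exact mul_le_mul_of_nonneg_left (pow_le_pow_left₀ (abs_nonneg z) hz' _) (by positivity)
        have hfp : (0:ℝ) < (Nat.factorial k : ℝ) := by positivity
        obtain ⟨j, rfl⟩ := Nat.exists_eq_succ_of_ne_zero hk0
        simp only [Nat.succ_eq_add_one] at *
        calc |((j+1 : ℕ):ℝ) * z ^ (j+1-1)| / ((Nat.factorial (j+1) * Nat.factorial (m + (j+1)) : ℕ) : ℝ)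
            ≤ (((j:ℝ)+1) * R ^ (j+1-1)) / (Nat.factorial (j+1) : ℝ) := by
              apply div_le_div₀ (by positivity) (by exact_mod_cast habs) (by positivity) hden
          _ = R ^ (j+1-1) / (Nat.factorial (j+1-1) : ℝ) := by
              simp only [Nat.add_sub_cancel]
              have : ((Nat.factorial (j+1) : ℕ) : ℝ) = ((j:ℝ)+1) * (Nat.factorial j : ℝ) := by
                push_cast [Nat.factorial_succ]; ring
              rw [this]
              have h1 : ((j:ℝ)+1) ≠ 0 := by positivity
              have h2 : (Nat.factorial j : ℝ) ≠ 0 := by positivity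
              field_simp)
    h0mem (summable_besF m 0) htmem
  have : (∑' k : ℕ, (-1 : ℝ) ^ k * ((k:ℝ) * t ^ (k-1)) /
      ((Nat.factorial k * Nat.factorial (m + k) : ℕ) : ℝ)) = -besF (m+1) t :=
    (hasSum_besF_deriv m t).tsum_eq
  rw [this] at key
  exact key

/-- The key recurrence: `(m+1) F_{m+1}(t) = F_m(t) + t F_{m+2}(t)`. -/
lemma besF_identity (m : ℕ) (t : ℝ) :
    ((m:ℝ) + 1) * besF (m+1) t = besF m t + t * besF (m+2) t := by
  -- t * besF (m+2) t as a shifted sum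
  have hB : HasSum (fun k : ℕ => t * ((-1 : ℝ) ^ k * t ^ k /
      ((Nat.factorial k * Nat.factorial (m + 2 + k) : ℕ) : ℝ))) (t * besF (m+2) t) :=
    (hasSum_besF (m+2) t).mul_left t
  -- define the shifted family
  set c : ℕ → ℝ := fun k => if k = 0 then 0 else
      t * ((-1 : ℝ) ^ (k-1) * t ^ (k-1) /
      ((Nat.factorial (k-1) * Nat.factorial (m + 2 + (k-1)) : ℕ) : ℝ)) with hc
  have hC : HasSum c (t * besF (m+2) t) := by
    have := (hasSum_nat_add_iff (f := c) 1).mp (by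
      refine hB.congr_fun fun k => ?_
      simp [hc])
    simpa [hc] using this
  have hA := hasSum_besF m t
  have hAC := hA.add hC
  have hD := (hasSum_besF (m+1) t).mul_left ((m:ℝ)+1)
  have : (fun k : ℕ => (-1 : ℝ) ^ k * t ^ k /
      ((Nat.factorial k * Nat.factorial (m + k) : ℕ) : ℝ) + c k)
      = fun k : ℕ => ((m:ℝ)+1) * ((-1 : ℝ) ^ k * t ^ k /
      ((Nat.factorial k * Nat.factorial (m + 1 + k) : ℕ) : ℝ)) := by
    funext k
    rcases Nat.eq_zero_or_pos k with hk | hk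
    · subst hk
      simp only [hc, if_pos rfl, pow_zero, one_mul, add_zero, Nat.add_zero]
      rw [Nat.factorial_zero]
      have : (Nat.factorial (m+1) : ℝ) = ((m:ℝ)+1) * (Nat.factorial m : ℝ) := by
        push_cast [Nat.factorial_succ]; ring
      push_cast [this]
      have h2 : (Nat.factorial m : ℝ) ≠ 0 := by positivity
      field_simp
    · obtain ⟨j, rfl⟩ := Nat.exists_eq_succ_of_ne_zero hk.ne'
      simp only [Nat.succ_eq_add_one, hc, Nat.succ_ne_zero, if_false, Nat.add_sub_cancel]
      have e1 : m + 2 + j = m + 1 + (j + 1) := by ring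
      have e2 : m + (j+1) + 1 = m + 1 + (j + 1) := by ring
      rw [e1]
      have hf1 : ((Nat.factorial (j+1) : ℕ) : ℝ) = ((j:ℝ)+1) * (Nat.factorial j : ℝ) := by
        push_cast [Nat.factorial_succ]; ring
      have hf2 : ((Nat.factorial (m + 1 + (j+1)) : ℕ) : ℝ)
          = ((m:ℝ) + 1 + ((j:ℝ)+1)) * (Nat.factorial (m + (j+1)) : ℝ) := by
        have : m + 1 + (j + 1) = (m + (j+1)) + 1 := by ring
        rw [this, Nat.factorial_succ]
        push_cast; ring
      have h1 : (Nat.factorial j : ℝ) ≠ 0 := by positivity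
      have h2 : (Nat.factorial (m + (j+1)) : ℝ) ≠ 0 := by positivity
      have h3 : ((j:ℝ)+1) ≠ 0 := by positivity
      have h4 : ((m:ℝ) + 1 + ((j:ℝ)+1)) ≠ 0 := by positivity
      push_cast [hf1, hf2, pow_succ]
      field_simp
      ring
  rw [this] at hAC
  exact hD.unique hAC

lemma besselJ_eq (m : ℕ) (x : ℝ) : besselJ m x = (x/2)^m * besF m (x^2/4) := by
  rw [besselJ, besF, ← tsum_mul_left]
  congr 1
  funext k
  have : x^2/4 = (x/2)^2 := by ring
  rw [this, ← pow_mul, pow_add]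
  ring

/-- `G m x = e^x F_m(x²/4)`, so that `besselJ m x = (x/2)^m e^{-x} G m x`. -/
noncomputable def besG (m : ℕ) (x : ℝ) : ℝ := Real.exp x * besF m (x^2/4)

/-- The derivative of `besG`. -/
noncomputable def besG1 (m : ℕ) (x : ℝ) : ℝ :=
  Real.exp x * (besF m (x^2/4) - x/2 * besF (m+1) (x^2/4))

lemma hasDerivAt_sq4 (x : ℝ) : HasDerivAt (fun z : ℝ => z^2/4) (x/2) x := by
  have := (hasDerivAt_pow 2 x).div_const 4
  refine this.congr_deriv ?_
  push_cast; ring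

lemma hasDerivAt_besF_comp (m : ℕ) (x : ℝ) :
    HasDerivAt (fun z : ℝ => besF m (z^2/4)) (-(x/2) * besF (m+1) (x^2/4)) x := by
  have := (hasDerivAt_besF m (x^2/4)).comp x (hasDerivAt_sq4 x)
  refine this.congr_deriv ?_
  ring

lemma hasDerivAt_besG (m : ℕ) (x : ℝ) : HasDerivAt (besG m) (besG1 m x) x := by
  have h := (Real.hasDerivAt_exp x).mul (hasDerivAt_besF_comp m x)
  refine h.congr_deriv ?_
  unfold besG1
  ring

lemma hasDerivAt_besG1 (m : ℕ) (x : ℝ) :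
    HasDerivAt (besG1 m) (Real.exp x * (((m:ℝ) + 1/2 - x) * besF (m+1) (x^2/4))) x := by
  have hin : HasDerivAt (fun z : ℝ => besF m (z^2/4) - z/2 * besF (m+1) (z^2/4))
      (-(x/2) * besF (m+1) (x^2/4)
        - (1/2 * besF (m+1) (x^2/4) + x/2 * (-(x/2) * besF (m+2) (x^2/4)))) x := by
    exact (hasDerivAt_besF_comp m x).sub
      (((hasDerivAt_id x).div_const 2).mul (hasDerivAt_besF_comp (m+1) x))
  have h := (Real.hasDerivAt_exp x).mul hin
  refine h.congr_deriv ?_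
  have hid := besF_identity m (x^2/4)
  have : besF m (x^2/4) = ((m:ℝ)+1) * besF (m+1) (x^2/4) - x^2/4 * besF (m+2) (x^2/4) := by
    linarith
  rw [this]
  ring

lemma continuous_besG1 (m : ℕ) : Continuous (besG1 m) :=
  (Differentiable.continuous fun y => (hasDerivAt_besG1 m y).differentiableAt)

lemma besG1_zero (m : ℕ) : besG1 m 0 = 1 / (Nat.factorial m : ℝ) := by
  have : (0:ℝ)^2/4 = 0 := by norm_num
  simp [besG1, this, besF_zero]

lemma besG_zero (m : ℕ) : besG m 0 = 1 / (Nat.factorial m : ℝ) := by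
  have : (0:ℝ)^2/4 = 0 := by norm_num
  simp [besG, this, besF_zero]

/-- Key sign lemma: the derivative of `besG m` is positive on `[0, m]`. -/
lemma besG1_pos (m : ℕ) {x : ℝ} (hx : x ∈ Icc (0:ℝ) (m:ℝ)) : 0 < besG1 m x := by
  by_contra hcon
  push_neg at hcon
  set S : Set ℝ := Icc (0:ℝ) (m:ℝ) ∩ {z | besG1 m z ≤ 0} with hS
  have hSne : S.Nonempty := ⟨x, hx, hcon⟩
  have hSclosed : IsClosed S :=
    isClosed_Icc.inter (isClosed_le (continuous_besG1 m) continuous_const)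
  have hSbdd : BddBelow S := ⟨0, fun z hz => hz.1.1⟩
  set c := sInf S with hc
  have hcS : c ∈ S := hSclosed.csInf_mem hSne hSbdd
  have hc0 : 0 ≤ c := hcS.1.1
  have hcm : c ≤ m := hcS.1.2
  have h0pos : 0 < besG1 m 0 := by rw [besG1_zero]; positivity
  have hcpos : 0 < c := by
    rcases hc0.lt_or_eq with h | h
    · exact h
    · exfalso; rw [← h] at hcS; exact absurd hcS.2 (not_le.2 h0pos)
  have hbelow : ∀ z, 0 ≤ z → z < c → 0 < besG1 m z := by
    intro z hz0 hzc
    by_contra h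
    push_neg at h
    have hzS : z ∈ S := ⟨⟨hz0, hzc.le.trans hcm⟩, h⟩
    exact absurd (csInf_le hSbdd hzS) (not_le.2 hzc)
  have hzero : besG1 m c = 0 := by
    refine le_antisymm hcS.2 ?_
    have hlim : Tendsto (besG1 m) (𝓝[<] c) (𝓝 (besG1 m c)) :=
      ((continuous_besG1 m).tendsto c).mono_left nhdsWithin_le_nhds
    refine ge_of_tendsto hlim ?_
    filter_upwards [Ioo_mem_nhdsLT hcpos] with z hz
    exact (hbelow z hz.1.le hz.2).le
  have hGmono : MonotoneOn (besG m) (Icc 0 c) := by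
    apply monotoneOn_of_deriv_nonneg (convex_Icc 0 c)
      ((Differentiable.continuous fun y => (hasDerivAt_besG m y).differentiableAt).continuousOn)
      (fun z _ => (hasDerivAt_besG m z).differentiableAt.differentiableWithinAt)
    intro z hz
    rw [interior_Icc] at hz
    rw [(hasDerivAt_besG m z).deriv]
    exact (hbelow z hz.1.le hz.2).le
  have hGc : 0 < besG m c := by
    have h1 := hGmono (left_mem_Icc.2 hcpos.le) (right_mem_Icc.2 hcpos.le) hcpos.le
    rw [besG_zero] at h1
    have h2 : (0:ℝ) < 1 / (Nat.factorial m : ℝ) := by positivity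
    linarith
  have hF1 : 0 < besF (m+1) (c^2/4) := by
    have hdiff : besG m c - besG1 m c = Real.exp c * (c/2 * besF (m+1) (c^2/4)) := by
      unfold besG besG1; ring
    rw [hzero, sub_zero] at hdiff
    have h1 : 0 < Real.exp c * (c/2 * besF (m+1) (c^2/4)) := hdiff ▸ hGc
    by_contra hFc
    push_neg at hFc
    have h2 : c/2 * besF (m+1) (c^2/4) ≤ 0 :=
      mul_nonpos_of_nonneg_of_nonpos (by linarith) hFc
    have h3 : Real.exp c * (c/2 * besF (m+1) (c^2/4)) ≤ 0 :=
      mul_nonpos_of_nonneg_of_nonpos (Real.exp_pos c).le h2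
    linarith
  have hd : 0 < Real.exp c * (((m:ℝ) + 1/2 - c) * besF (m+1) (c^2/4)) := by
    have h1 : (0:ℝ) < (m:ℝ) + 1/2 - c := by linarith
    positivity
  have hslope := hasDerivAt_iff_tendsto_slope.mp (hasDerivAt_besG1 m c)
  have hslope' : Tendsto (slope (besG1 m) c) (𝓝[<] c)
      (𝓝 (Real.exp c * (((m:ℝ) + 1/2 - c) * besF (m+1) (c^2/4)))) :=
    hslope.mono_left (nhdsWithin_mono c fun z hz => ne_of_lt hz)
  have hev : ∀ᶠ z in 𝓝[<] c, 0 < slope (besG1 m) c z :=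
    hslope'.eventually (lt_mem_nhds hd)
  have hev2 : ∀ᶠ z in 𝓝[<] c, z ∈ Ioo 0 c :=
    eventually_of_mem (Ioo_mem_nhdsLT hcpos) fun z hz => hz
  obtain ⟨z, hz1, hz2⟩ := (hev.and hev2).exists
  have hneg : besG1 m z < 0 := by
    rw [slope_def_field, hzero, sub_zero] at hz1
    have h5 : z - c < 0 := sub_neg.2 hz2.2
    rcases div_pos_iff.mp hz1 with ⟨_, h⟩ | ⟨h, _⟩
    · linarith
    · linarith
  exact absurd (hbelow z hz2.1.le hz2.2) (not_lt.2 hneg.le)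

lemma besG_mono (m : ℕ) : MonotoneOn (besG m) (Icc (0:ℝ) (m:ℝ)) := by
  apply monotoneOn_of_deriv_nonneg (convex_Icc _ _)
    ((Differentiable.continuous fun y => (hasDerivAt_besG m y).differentiableAt).continuousOn)
    (fun z _ => (hasDerivAt_besG m z).differentiableAt.differentiableWithinAt)
  intro z hz
  rw [interior_Icc] at hz
  rw [(hasDerivAt_besG m z).deriv]
  exact (besG1_pos m ⟨hz.1.le, hz.2.le⟩).le

/-- for `0 < x ≤ y ≤ m`, `J_m(x) ≤ e^{y-x}(x/y)^m J_m(y)`. -/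
theorem besselJ_monotone_bound (m : ℕ) (hm : 1 ≤ m) (x y : ℝ)
    (hx : 0 < x) (hxy : x ≤ y) (hym : y ≤ m) :
    besselJ m x ≤ Real.exp (y - x) * (x / y) ^ m * besselJ m y := by
  have hy : 0 < y := hx.trans_le hxy
  have hmono := besG_mono m ⟨hx.le, hxy.trans hym⟩ ⟨hy.le, hym⟩ hxy
  simp only [besG] at hmono
  have key : besF m (x^2/4) ≤ Real.exp (y-x) * besF m (y^2/4) := by
    rw [Real.exp_sub, div_mul_eq_mul_div, le_div_iff₀ (Real.exp_pos x)]
    nlinarith [hmono]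
  rw [besselJ_eq, besselJ_eq]
  have h2 : (x/2:ℝ)^m = (x/y)^m * (y/2)^m := by
    rw [← mul_pow]
    congr 1
    field_simp
  calc (x/2:ℝ)^m * besF m (x^2/4) = (x/y)^m * ((y/2)^m * besF m (x^2/4)) := by
        rw [h2]; ring
    _ ≤ (x/y)^m * ((y/2)^m * (Real.exp (y-x) * besF m (y^2/4))) := by
        apply mul_le_mul_of_nonneg_left _ (by positivity)
        apply mul_le_mul_of_nonneg_left key (by positivity)
    _ = Real.exp (y-x) * (x/y)^m * ((y/2)^m * besF m (y^2/4)) := by ring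
end

section
/- For every integer m ≥ 1 and real x with 0 < x ≤ m, it holds 0 ≤ J_m'(x)/J_m(x) ≤ m/x − x/(2(m+1)) ≤ m/x. -/
noncomputable def bCoef (m k : ℕ) : ℝ :=
  (-1)^k / (2^(m+2*k) * (Nat.factorial k) * (Nat.factorial (m+k)))

lemma abs_bCoef_le (m k : ℕ) : |bCoef m k| ≤ (1/4)^k / (Nat.factorial k) := by
  have h1 : (0:ℝ) < 2^(m+2*k) * (Nat.factorial k) * (Nat.factorial (m+k)) := by
    positivity
  have : |bCoef m k| = 1 / (2^(m+2*k) * (Nat.factorial k) * (Nat.factorial (m+k))) := by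
    rw [bCoef, abs_div, abs_pow, abs_neg, abs_one, one_pow, abs_of_pos h1]
  rw [this]
  rw [div_le_div_iff₀ h1 (by positivity)]
  have h2 : ((4:ℝ))^k ≤ 2^(m+2*k) := by
    calc ((4:ℝ))^k = 2^(2*k) := by rw [pow_mul]; norm_num
    _ ≤ 2^(m+2*k) := by
        apply pow_le_pow_right₀ (by norm_num)
        omega
  have h3 : (1:ℝ) ≤ (Nat.factorial (m+k)) :=
    Nat.one_le_cast.mpr (Nat.one_le_iff_ne_zero.mpr (Nat.factorial_ne_zero _))
  calc (1:ℝ) * (Nat.factorial k) = 4^k * (Nat.factorial k) * (1/4)^k := by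
        rw [mul_comm ((4:ℝ)^k), mul_assoc, ← mul_pow]
        norm_num
    _ ≤ 2^(m+2*k) * (Nat.factorial k) * (Nat.factorial (m+k)) * (1/4)^k := by
        apply mul_le_mul_of_nonneg_right _ (by positivity)
        calc ((4:ℝ))^k * (Nat.factorial k) = 4^k * (Nat.factorial k) * 1 := by ring
        _ ≤ 2^(m+2*k) * (Nat.factorial k) * (Nat.factorial (m+k)) := by
            apply mul_le_mul _ h3 (by norm_num) (by positivity)
            exact mul_le_mul_of_nonneg_right h2 (by positivity)
    _ = (1/4)^k * (2^(m+2*k) * (Nat.factorial k) * (Nat.factorial (m+k))) := by ring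

lemma bCoef_succ (m k : ℕ) :
    bCoef m (k+1) * (4*(k+1)*((m:ℝ)+k+1)) = - bCoef m k := by
  have h1 : m + 2*(k+1) = (m + 2*k) + 2 := by omega
  have h2 : m + (k+1) = (m+k) + 1 := by omega
  rw [bCoef, bCoef, h1, h2, Nat.factorial_succ, Nat.factorial_succ, pow_succ, pow_succ, pow_succ]
  have hf1 : ((Nat.factorial k):ℝ) ≠ 0 := Nat.cast_ne_zero.mpr (Nat.factorial_ne_zero _)
  have hf2 : ((Nat.factorial (m+k)):ℝ) ≠ 0 := Nat.cast_ne_zero.mpr (Nat.factorial_ne_zero _)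
  have h2 : ((2:ℝ))^(m+2*k) ≠ 0 := by positivity
  push_cast
  field_simp
  ring

lemma bCoef_shift (m k : ℕ) :
    bCoef (m+2) k * (4*((m:ℝ)+k+1)*((m:ℝ)+k+2)) = bCoef m k := by
  have h1 : m + 2 + 2*k = (m + 2*k) + 2 := by omega
  have h2 : m + 2 + k = ((m+k) + 1) + 1 := by omega
  rw [bCoef, bCoef, h1, h2, Nat.factorial_succ, Nat.factorial_succ, pow_succ, pow_succ]
  have hf1 : ((Nat.factorial k):ℝ) ≠ 0 := Nat.cast_ne_zero.mpr (Nat.factorial_ne_zero _)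
  have hf2 : ((Nat.factorial (m+k)):ℝ) ≠ 0 := Nat.cast_ne_zero.mpr (Nat.factorial_ne_zero _)
  have h2 : ((2:ℝ))^(m+2*k) ≠ 0 := by positivity
  push_cast
  field_simp
  ring

lemma summable_master (m : ℕ) (A : ℝ) (c : ℕ → ℝ) (e : ℕ → ℕ) (R : ℝ)
    (hc0 : ∀ k, 0 ≤ c k) (hcA : ∀ k, c k ≤ A * 4^k)
    (he : ∀ k, e k ≤ m + 2*k + 2) (hR : 1 ≤ R) :
    Summable (fun k => |bCoef m k| * c k * R ^ (e k)) := by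
  have hA : 0 ≤ A := by
    have h := (hc0 0).trans (hcA 0)
    simpa using h
  have hR0 : (0:ℝ) ≤ R := by linarith
  apply Summable.of_nonneg_of_le
  · intro k
    exact mul_nonneg (mul_nonneg (abs_nonneg _) (hc0 k)) (by positivity)
  · intro k
    show |bCoef m k| * c k * R ^ (e k) ≤ A * R^(m+2) * (R^2)^k / (Nat.factorial k)
    have h1 : |bCoef m k| ≤ (1/4)^k / (Nat.factorial k) := abs_bCoef_le m k
    have h2 : R ^ (e k) ≤ R^(m+2*k+2) := pow_le_pow_right₀ hR (he k)
    calc |bCoef m k| * c k * R ^ (e k)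
        ≤ ((1/4)^k / (Nat.factorial k)) * (A * 4^k) * R^(m+2*k+2) := by
          apply mul_le_mul (mul_le_mul h1 (hcA k) (hc0 k) (by positivity)) h2 (by positivity)
          positivity
      _ = A * R^(m+2) * (R^2)^k / (Nat.factorial k) := by
          have hfk : ((Nat.factorial k):ℝ) ≠ 0 := Nat.cast_ne_zero.mpr (Nat.factorial_ne_zero _)
          have hre : R^(m+2*k+2) = R^(m+2) * (R^2)^k := by
            rw [← pow_mul, ← pow_add]
            congr 1
            omega
          rw [hre]
          field_simp
          have h14 : ((1:ℝ)/4)^k * 4^k = 1 := by rw [← mul_pow]; norm_num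
          linear_combination A * h14
  · have := (Real.summable_pow_div_factorial (R^2)).mul_left (A * R^(m+2))
    apply this.congr
    intro k
    ring

noncomputable def Jf (m : ℕ) (x : ℝ) : ℝ := ∑' k, bCoef m k * x^(m+2*k)
noncomputable def D1f (m : ℕ) (x : ℝ) : ℝ :=
  ∑' k, bCoef m k * ((m+2*k : ℕ):ℝ) * x^(m+2*k-1)
noncomputable def D2f (m : ℕ) (x : ℝ) : ℝ :=
  ∑' k, bCoef m k * ((m+2*k : ℕ):ℝ) * ((m+2*k-1 : ℕ):ℝ) * x^(m+2*k-2)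

lemma nat_le_pow (m k : ℕ) : m + 2*k ≤ (m+2) * 2^k := by
  have h : k + 1 ≤ 2^k := (Nat.lt_two_pow_self (n := k))
  calc m + 2*k ≤ (m+2) * (k+1) := by nlinarith
    _ ≤ (m+2) * 2^k := Nat.mul_le_mul_left _ h

lemma cast_le_pow2 (m k : ℕ) : ((m+2*k : ℕ):ℝ) ≤ ((m:ℝ)+2) * 2^k := by
  have h := nat_le_pow m k
  calc ((m+2*k : ℕ):ℝ) ≤ (((m+2) * 2^k : ℕ):ℝ) := Nat.cast_le.mpr h
    _ = ((m:ℝ)+2) * 2^k := by push_cast; ring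

lemma cast_le_A1 (m k : ℕ) : ((m+2*k : ℕ):ℝ) ≤ ((m:ℝ)+2) * 4^k := by
  calc ((m+2*k : ℕ):ℝ) ≤ ((m:ℝ)+2) * 2^k := cast_le_pow2 m k
    _ ≤ ((m:ℝ)+2) * 4^k := by
        apply mul_le_mul_of_nonneg_left _ (by positivity)
        apply pow_le_pow_left₀ (by norm_num) (by norm_num)

lemma summable_u1 (m : ℕ) (R : ℝ) (hR : 1 ≤ R) :
    Summable (fun k => |bCoef m k| * ((m+2*k : ℕ):ℝ) * R^(m+2*k-1)) := by
  apply summable_master m ((m:ℝ)+2) _ _ R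
  · intro k; positivity
  · intro k; exact cast_le_A1 m k
  · intro k; omega
  · exact hR

lemma summable_u2 (m : ℕ) (R : ℝ) (hR : 1 ≤ R) :
    Summable (fun k => |bCoef m k| * (((m+2*k : ℕ):ℝ) * ((m+2*k-1 : ℕ):ℝ)) * R^(m+2*k-2)) := by
  apply summable_master m (((m:ℝ)+2)^2) _ _ R
  · intro k; positivity
  · intro k
    have h1 := cast_le_pow2 m k
    have h2 : ((m+2*k-1 : ℕ):ℝ) ≤ ((m:ℝ)+2) * 2^k := by
      refine le_trans ?_ h1
      exact Nat.cast_le.mpr (by omega)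
    calc ((m+2*k : ℕ):ℝ) * ((m+2*k-1 : ℕ):ℝ) ≤ (((m:ℝ)+2) * 2^k) * (((m:ℝ)+2) * 2^k) := by
          apply mul_le_mul h1 h2 (by positivity) (by positivity)
      _ = ((m:ℝ)+2)^2 * 4^k := by
          rw [show ((4:ℝ))^k = 2^k * 2^k by rw [← mul_pow]; norm_num]
          ring
  · intro k; omega
  · exact hR

lemma summable_u0 (m : ℕ) (R : ℝ) (hR : 1 ≤ R) :
    Summable (fun k => |bCoef m k| * (1:ℝ) * R^(m+2*k)) := by
  apply summable_master m 1 _ _ R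
  · intro k; norm_num
  · intro k; rw [one_mul]; exact one_le_pow₀ (by norm_num : (1:ℝ) ≤ 4)
  · intro k; omega
  · exact hR

lemma abs_le_max1 (x : ℝ) (n : ℕ) : |x|^n ≤ (max 1 |x|)^n :=
  pow_le_pow_left₀ (abs_nonneg x) (le_max_right _ _) n

lemma summable_Jf (m : ℕ) (x : ℝ) : Summable (fun k => bCoef m k * x^(m+2*k)) := by
  apply Summable.of_norm_bounded (summable_u0 m (max 1 |x|) (le_max_left _ _))
  intro k
  rw [norm_mul, norm_pow, mul_one]
  exact mul_le_mul_of_nonneg_left (abs_le_max1 x _) (abs_nonneg _)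

lemma summable_D1f (m : ℕ) (x : ℝ) :
    Summable (fun k => bCoef m k * ((m+2*k : ℕ):ℝ) * x^(m+2*k-1)) := by
  apply Summable.of_norm_bounded (summable_u1 m (max 1 |x|) (le_max_left _ _))
  intro k
  rw [norm_mul, norm_mul, norm_pow]
  have : ‖bCoef m k‖ * ‖((m+2*k : ℕ):ℝ)‖ = |bCoef m k| * ((m+2*k : ℕ):ℝ) := by
    rw [Real.norm_eq_abs, Real.norm_eq_abs, abs_of_nonneg (by positivity : (0:ℝ) ≤ ((m+2*k : ℕ):ℝ))]
  rw [this]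
  exact mul_le_mul_of_nonneg_left (abs_le_max1 x _) (by positivity)

lemma summable_D2f (m : ℕ) (x : ℝ) :
    Summable (fun k => bCoef m k * ((m+2*k : ℕ):ℝ) * ((m+2*k-1 : ℕ):ℝ) * x^(m+2*k-2)) := by
  apply Summable.of_norm_bounded (summable_u2 m (max 1 |x|) (le_max_left _ _))
  intro k
  rw [norm_mul, norm_mul, norm_mul, norm_pow]
  have e1 : ‖((m+2*k : ℕ):ℝ)‖ = ((m+2*k : ℕ):ℝ) := by
    rw [Real.norm_eq_abs, abs_of_nonneg (by positivity)]
  have e2 : ‖((m+2*k-1 : ℕ):ℝ)‖ = ((m+2*k-1 : ℕ):ℝ) := by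
    rw [Real.norm_eq_abs, abs_of_nonneg (by positivity)]
  rw [e1, e2]
  calc ‖bCoef m k‖ * ((m+2*k : ℕ):ℝ) * ((m+2*k-1 : ℕ):ℝ) * ‖x‖^(m+2*k-2)
      ≤ ‖bCoef m k‖ * ((m+2*k : ℕ):ℝ) * ((m+2*k-1 : ℕ):ℝ) * (max 1 |x|)^(m+2*k-2) := by
        apply mul_le_mul_of_nonneg_left (abs_le_max1 x _) (by positivity)
    _ = |bCoef m k| * (((m+2*k : ℕ):ℝ) * ((m+2*k-1 : ℕ):ℝ)) * (max 1 |x|)^(m+2*k-2) := by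
        rw [Real.norm_eq_abs]; ring

lemma hasDerivAt_Jf (m : ℕ) (x : ℝ) : HasDerivAt (Jf m) (D1f m x) x := by
  have key : ∀ y : ℝ, y ∈ Metric.ball (0:ℝ) (1 + |x|) →
      HasDerivAt (fun z => ∑' k, bCoef m k * z^(m+2*k))
        (∑' k, bCoef m k * ((m+2*k : ℕ):ℝ) * y^(m+2*k-1)) y := by
    intro y hy
    have hR : (1:ℝ) ≤ 1 + |x| := by linarith [abs_nonneg x]
    apply hasDerivAt_tsum_of_isPreconnected (summable_u1 m (1+|x|) hR)
        Metric.isOpen_ball (convex_ball (0:ℝ) (1+|x|)).isPreconnected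
        (g := fun k z => bCoef m k * z^(m+2*k))
        (g' := fun k z => bCoef m k * ((m+2*k : ℕ):ℝ) * z^(m+2*k-1))
        (y₀ := 0) ?_ ?_ ?_ ?_ hy
    · intro k z hz
      have := (hasDerivAt_pow (m+2*k) z).const_mul (bCoef m k)
      simpa [mul_assoc] using this
    · intro k z hz
      rw [Metric.mem_ball, Real.dist_eq, sub_zero] at hz
      rw [norm_mul, norm_mul, norm_pow]
      have e1 : ‖((m+2*k : ℕ):ℝ)‖ = ((m+2*k : ℕ):ℝ) := by
        rw [Real.norm_eq_abs, abs_of_nonneg (by positivity)]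
      rw [e1, Real.norm_eq_abs, Real.norm_eq_abs]
      apply mul_le_mul_of_nonneg_left _ (by positivity)
      exact pow_le_pow_left₀ (abs_nonneg z) (le_of_lt hz) _
    · rw [Metric.mem_ball, dist_self]; linarith [abs_nonneg x]
    · exact summable_Jf m 0
  have hx : x ∈ Metric.ball (0:ℝ) (1 + |x|) := by
    rw [Metric.mem_ball, Real.dist_eq, sub_zero]
    linarith [abs_nonneg x]
  exact key x hx

lemma hasDerivAt_D1f (m : ℕ) (x : ℝ) : HasDerivAt (D1f m) (D2f m x) x := by
  have key : ∀ y : ℝ, y ∈ Metric.ball (0:ℝ) (1 + |x|) →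
      HasDerivAt (fun z => ∑' k, bCoef m k * ((m+2*k : ℕ):ℝ) * z^(m+2*k-1))
        (∑' k, bCoef m k * ((m+2*k : ℕ):ℝ) * ((m+2*k-1 : ℕ):ℝ) * y^(m+2*k-2)) y := by
    intro y hy
    have hR : (1:ℝ) ≤ 1 + |x| := by linarith [abs_nonneg x]
    apply hasDerivAt_tsum_of_isPreconnected (summable_u2 m (1+|x|) hR)
        Metric.isOpen_ball (convex_ball (0:ℝ) (1+|x|)).isPreconnected
        (g := fun k z => bCoef m k * ((m+2*k : ℕ):ℝ) * z^(m+2*k-1))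
        (g' := fun k z => bCoef m k * ((m+2*k : ℕ):ℝ) * ((m+2*k-1 : ℕ):ℝ) * z^(m+2*k-2))
        (y₀ := 0) ?_ ?_ ?_ ?_ hy
    · intro k z hz
      have h := (hasDerivAt_pow (m+2*k-1) z).const_mul (bCoef m k * ((m+2*k : ℕ):ℝ))
      have he : m+2*k-1-1 = m+2*k-2 := by omega
      rw [he] at h
      simpa [mul_assoc] using h
    · intro k z hz
      rw [Metric.mem_ball, Real.dist_eq, sub_zero] at hz
      rw [norm_mul, norm_mul, norm_mul, norm_pow]
      have e1 : ‖((m+2*k : ℕ):ℝ)‖ = ((m+2*k : ℕ):ℝ) := by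
        rw [Real.norm_eq_abs, abs_of_nonneg (by positivity)]
      have e2 : ‖((m+2*k-1 : ℕ):ℝ)‖ = ((m+2*k-1 : ℕ):ℝ) := by
        rw [Real.norm_eq_abs, abs_of_nonneg (by positivity)]
      rw [e1, e2, Real.norm_eq_abs, Real.norm_eq_abs]
      calc |bCoef m k| * ((m+2*k : ℕ):ℝ) * ((m+2*k-1 : ℕ):ℝ) * |z|^(m+2*k-2)
          ≤ |bCoef m k| * ((m+2*k : ℕ):ℝ) * ((m+2*k-1 : ℕ):ℝ) * (1+|x|)^(m+2*k-2) := by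
            apply mul_le_mul_of_nonneg_left _ (by positivity)
            exact pow_le_pow_left₀ (abs_nonneg z) (le_of_lt hz) _
        _ = |bCoef m k| * (((m+2*k : ℕ):ℝ) * ((m+2*k-1 : ℕ):ℝ)) * (1+|x|)^(m+2*k-2) := by
            ring
    · rw [Metric.mem_ball, dist_self]; linarith [abs_nonneg x]
    · exact summable_D1f m 0
  have hx : x ∈ Metric.ball (0:ℝ) (1 + |x|) := by
    rw [Metric.mem_ball, Real.dist_eq, sub_zero]
    linarith [abs_nonneg x]
  exact key x hx

lemma summable_gen (m : ℕ) (c : ℕ → ℝ) (A : ℝ) (x : ℝ) (e : ℕ → ℕ)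
    (hcA : ∀ k, |c k| ≤ A * 4^k) (he : ∀ k, e k ≤ m+2*k+2) :
    Summable (fun k => c k * bCoef m k * x^(e k)) := by
  set R := max 1 |x| with hRdef
  have hR : (1:ℝ) ≤ R := le_max_left _ _
  apply Summable.of_norm_bounded (summable_master m A (fun k => |c k|) e R
    (fun k => abs_nonneg _) hcA he hR)
  intro k
  rw [norm_mul, norm_mul, norm_pow, Real.norm_eq_abs, Real.norm_eq_abs, Real.norm_eq_abs]
  calc |c k| * |bCoef m k| * |x|^(e k) ≤ |c k| * |bCoef m k| * R^(e k) := by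
        apply mul_le_mul_of_nonneg_left _ (by positivity)
        exact pow_le_pow_left₀ (abs_nonneg x) (le_max_right _ _) _
    _ = |bCoef m k| * |c k| * R^(e k) := by ring

lemma ode_identity (m : ℕ) (hm : 1 ≤ m) (x : ℝ) :
    x * D1f m x + x^2 * D2f m x + (x^2 - (m:ℝ)^2) * Jf m x = 0 := by
  have hk2 : ∀ k : ℕ, (k:ℝ) ≤ 4^k := by
    intro k
    calc (k:ℝ) ≤ (2:ℝ)^k := by exact_mod_cast ((Nat.lt_two_pow_self (n := k))).le
      _ ≤ 4^k := pow_le_pow_left₀ (by norm_num) (by norm_num) k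
  have hS1 : Summable (fun k => ((m+2*k:ℕ):ℝ) * bCoef m k * x^(m+2*k)) := by
    apply summable_gen m _ ((m:ℝ)+2) x _ _ (fun k => by omega)
    intro k
    rw [abs_of_nonneg (by positivity)]
    exact cast_le_A1 m k
  have hS2 : Summable (fun k => (((m+2*k:ℕ):ℝ) * ((m+2*k-1:ℕ):ℝ)) * bCoef m k * x^(m+2*k)) := by
    apply summable_gen m _ (((m:ℝ)+2)^2) x _ _ (fun k => by omega)
    intro k
    rw [abs_of_nonneg (by positivity)]
    have h1 := cast_le_pow2 m k
    have h2 : ((m+2*k-1 : ℕ):ℝ) ≤ ((m:ℝ)+2) * 2^k :=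
      le_trans (Nat.cast_le.mpr (by omega)) h1
    calc ((m+2*k : ℕ):ℝ) * ((m+2*k-1 : ℕ):ℝ) ≤ (((m:ℝ)+2) * 2^k) * (((m:ℝ)+2) * 2^k) :=
          mul_le_mul h1 h2 (by positivity) (by positivity)
      _ = ((m:ℝ)+2)^2 * 4^k := by
          rw [show ((4:ℝ))^k = 2^k * 2^k by rw [← mul_pow]; norm_num]
          ring
  have hS3 : Summable (fun k => (x^2 - (m:ℝ)^2) * bCoef m k * x^(m+2*k)) := by
    apply summable_gen m _ (|x^2 - (m:ℝ)^2|) x _ _ (fun k => by omega)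
    intro k
    calc |x^2 - (m:ℝ)^2| = |x^2 - (m:ℝ)^2| * 1 := by ring
      _ ≤ |x^2 - (m:ℝ)^2| * 4^k := by
          apply mul_le_mul_of_nonneg_left _ (abs_nonneg _)
          exact one_le_pow₀ (by norm_num)
  have hA : Summable (fun k : ℕ => (4*(k:ℝ)*((m:ℝ)+k)) * bCoef m k * x^(m+2*k)) := by
    apply summable_gen m _ (4*((m:ℝ)+2)^2) x _ _ (fun k => by omega)
    intro k
    rw [abs_of_nonneg (by positivity)]
    have h1 : (k:ℝ) ≤ ((m:ℝ)+2) * 2^k := by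
      calc (k:ℝ) ≤ (2:ℝ)^k := by exact_mod_cast ((Nat.lt_two_pow_self (n := k))).le
        _ ≤ ((m:ℝ)+2) * 2^k := by
            nlinarith [pow_pos (show (0:ℝ) < 2 by norm_num) k, (Nat.cast_nonneg m : (0:ℝ) ≤ (m:ℝ))]
    have h2 : (m:ℝ)+k ≤ ((m:ℝ)+2) * 2^k := by
      have hk : (k:ℝ) ≤ (2:ℝ)^k := by exact_mod_cast ((Nat.lt_two_pow_self (n := k))).le
      nlinarith [pow_pos (show (0:ℝ) < 2 by norm_num) k, (Nat.cast_nonneg m : (0:ℝ) ≤ (m:ℝ)),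
        (Nat.cast_nonneg k : (0:ℝ) ≤ (k:ℝ)),
        one_le_pow₀ (show (1:ℝ) ≤ 2 by norm_num) (n := k)]
    calc 4*(k:ℝ)*((m:ℝ)+k) ≤ 4*(((m:ℝ)+2) * 2^k)*(((m:ℝ)+2) * 2^k) := by
          apply mul_le_mul (mul_le_mul_of_nonneg_left h1 (by norm_num)) h2 (by positivity)
          positivity
      _ = 4*((m:ℝ)+2)^2 * 4^k := by
          rw [show ((4:ℝ))^k = 2^k * 2^k by rw [← mul_pow]; norm_num]
          ring
  have hB : Summable (fun k => (1:ℝ) * bCoef m k * x^(m+2*k+2)) := by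
    apply summable_gen m _ 1 x _ _ (fun k => by omega)
    intro k
    rw [abs_one]
    calc (1:ℝ) = 1 * 1 := by ring
      _ ≤ 1 * 4^k := by
          apply mul_le_mul_of_nonneg_left _ (by norm_num)
          exact one_le_pow₀ (by norm_num)
  -- rewrite the three products as tsums
  have e1 : x * D1f m x = ∑' k, ((m+2*k:ℕ):ℝ) * bCoef m k * x^(m+2*k) := by
    rw [D1f, ← tsum_mul_left]
    apply tsum_congr
    intro k
    have hp : x^(m+2*k) = x^(m+2*k-1) * x := by
      rw [← pow_succ]
      congr 1
      omega
    rw [hp]; ring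
  have e2 : x^2 * D2f m x = ∑' k, (((m+2*k:ℕ):ℝ) * ((m+2*k-1:ℕ):ℝ)) * bCoef m k * x^(m+2*k) := by
    rw [D2f, ← tsum_mul_left]
    apply tsum_congr
    intro k
    by_cases h2 : 2 ≤ m + 2*k
    · have hp : x^(m+2*k) = x^(m+2*k-2) * x^2 := by
        rw [← pow_add]
        congr 1
        omega
      rw [hp]; ring
    · have hm1 : m = 1 ∧ k = 0 := by omega
      obtain ⟨h1', h0'⟩ := hm1
      subst h1' h0'
      norm_num
  have e3 : (x^2 - (m:ℝ)^2) * Jf m x = ∑' k, (x^2 - (m:ℝ)^2) * bCoef m k * x^(m+2*k) := by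
    rw [Jf, ← tsum_mul_left]
    apply tsum_congr
    intro k
    ring
  rw [e1, e2, e3, ← Summable.tsum_add hS1 hS2, ← Summable.tsum_add (hS1.add hS2) hS3]
  have key : ∀ k : ℕ, (((m+2*k:ℕ):ℝ) * bCoef m k * x^(m+2*k) +
        (((m+2*k:ℕ):ℝ) * ((m+2*k-1:ℕ):ℝ)) * bCoef m k * x^(m+2*k)) +
        (x^2 - (m:ℝ)^2) * bCoef m k * x^(m+2*k)
      = (4*(k:ℝ)*((m:ℝ)+k)) * bCoef m k * x^(m+2*k) + (1:ℝ) * bCoef m k * x^(m+2*k+2) := by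
    intro k
    have c1 : ((m+2*k:ℕ):ℝ) = (m:ℝ) + 2*k := by push_cast; ring
    have c2 : ((m+2*k-1:ℕ):ℝ) = (m:ℝ) + 2*k - 1 := by
      rw [Nat.cast_sub (by omega)]
      push_cast; ring
    have hp : x^(m+2*k+2) = x^(m+2*k) * x^2 := by rw [pow_add]
    rw [c1, c2, hp]
    ring
  rw [tsum_congr key, Summable.tsum_add hA hB]
  have hA0 : ∑' k : ℕ, (4*(k:ℝ)*((m:ℝ)+k)) * bCoef m k * x^(m+2*k)
      = ∑' k : ℕ, (4*((k:ℝ)+1)*((m:ℝ)+k+1)) * bCoef m (k+1) * x^(m+2*(k+1)) := by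
    rw [Summable.tsum_eq_zero_add hA]
    norm_num
    apply tsum_congr
    intro k
    push_cast
    ring_nf
  rw [hA0]
  have keyshift : ∀ k : ℕ, (4*((k:ℝ)+1)*((m:ℝ)+k+1)) * bCoef m (k+1) * x^(m+2*(k+1))
      = - ((1:ℝ) * bCoef m k * x^(m+2*k+2)) := by
    intro k
    have hb := bCoef_succ m k
    have hp : m+2*(k+1) = m+2*k+2 := by omega
    rw [hp]
    linear_combination (x^(m+2*k+2)) * hb
  rw [tsum_congr keyshift, tsum_neg]
  ring

lemma recur_identity (m : ℕ) (hm : 1 ≤ m) (x : ℝ) :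
    2*((m:ℝ)+1) * ((m:ℝ) * Jf m x - x * D1f m x) = x^2 * Jf m x + x^2 * Jf (m+2) x := by
  have hP : Summable (fun k : ℕ => (-4*(k:ℝ)*((m:ℝ)+1)) * bCoef m k * x^(m+2*k)) := by
    apply summable_gen m _ (4*((m:ℝ)+1)) x _ _ (fun k => by omega)
    intro k
    have hk : (k:ℝ) ≤ (4:ℝ)^k := by
      calc (k:ℝ) ≤ (2:ℝ)^k := by exact_mod_cast ((Nat.lt_two_pow_self (n := k))).le
        _ ≤ 4^k := pow_le_pow_left₀ (by norm_num) (by norm_num) k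
    rw [show (-4:ℝ)*(k:ℝ)*((m:ℝ)+1) = -(4*(k:ℝ)*((m:ℝ)+1)) by ring, abs_neg,
      abs_of_nonneg (by positivity)]
    nlinarith [(Nat.cast_nonneg m : (0:ℝ) ≤ (m:ℝ)), (Nat.cast_nonneg k : (0:ℝ) ≤ (k:ℝ)),
      pow_pos (show (0:ℝ) < 4 by norm_num) k]
  have hB2 : Summable (fun k : ℕ => (1:ℝ) * bCoef m k * x^(m+2*k+2)) := by
    apply summable_gen m _ 1 x _ _ (fun k => by omega)
    intro k
    rw [abs_one]
    nlinarith [one_le_pow₀ (show (1:ℝ) ≤ 4 by norm_num) (n := k)]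
  have hQ : Summable (fun k : ℕ => (-(k:ℝ)/((m:ℝ)+k+1)) * bCoef m k * x^(m+2*k+2)) := by
    apply summable_gen m _ 1 x _ _ (fun k => by omega)
    intro k
    have hd : (0:ℝ) < (m:ℝ)+k+1 := by positivity
    rw [abs_div, abs_neg, abs_of_nonneg (Nat.cast_nonneg k), abs_of_pos hd]
    rw [div_le_iff₀ hd, one_mul]
    nlinarith [(Nat.cast_nonneg m : (0:ℝ) ≤ (m:ℝ)), (Nat.cast_nonneg k : (0:ℝ) ≤ (k:ℝ)),
      one_le_pow₀ (show (1:ℝ) ≤ 4 by norm_num) (n := k)]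
  -- LHS as a single tsum
  have hmJ : Summable (fun k : ℕ => (2*((m:ℝ)+1)*(m:ℝ)) * bCoef m k * x^(m+2*k)) := by
    apply summable_gen m _ (2*((m:ℝ)+1)*(m:ℝ)+1) x _ _ (fun k => by omega)
    intro k
    rw [abs_of_nonneg (by positivity)]
    nlinarith [one_le_pow₀ (show (1:ℝ) ≤ 4 by norm_num) (n := k),
      (show (0:ℝ) ≤ 2*((m:ℝ)+1)*(m:ℝ) by positivity)]
  have eL : 2*((m:ℝ)+1) * ((m:ℝ) * Jf m x - x * D1f m x)
      = ∑' k : ℕ, (-4*(k:ℝ)*((m:ℝ)+1)) * bCoef m k * x^(m+2*k) := by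
    have e1 : x * D1f m x = ∑' k, ((m+2*k:ℕ):ℝ) * bCoef m k * x^(m+2*k) := by
      rw [D1f, ← tsum_mul_left]
      apply tsum_congr
      intro k
      have hp : x^(m+2*k) = x^(m+2*k-1) * x := by
        rw [← pow_succ]; congr 1; omega
      rw [hp]; ring
    have e0 : (m:ℝ) * Jf m x = ∑' k, (m:ℝ) * bCoef m k * x^(m+2*k) := by
      rw [Jf, ← tsum_mul_left]
      apply tsum_congr
      intro k
      ring
    have hS1 : Summable (fun k => ((m+2*k:ℕ):ℝ) * bCoef m k * x^(m+2*k)) := by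
      apply summable_gen m _ ((m:ℝ)+2) x _ _ (fun k => by omega)
      intro k
      rw [abs_of_nonneg (by positivity)]
      exact cast_le_A1 m k
    have hS0 : Summable (fun k : ℕ => (m:ℝ) * bCoef m k * x^(m+2*k)) := by
      apply summable_gen m _ ((m:ℝ)+2) x _ _ (fun k => by omega)
      intro k
      rw [abs_of_nonneg (by positivity)]
      nlinarith [one_le_pow₀ (show (1:ℝ) ≤ 4 by norm_num) (n := k),
        (Nat.cast_nonneg m : (0:ℝ) ≤ (m:ℝ))]
    rw [e0, e1, ← Summable.tsum_sub hS0 hS1, ← tsum_mul_left]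
    apply tsum_congr
    intro k
    have c1 : ((m+2*k:ℕ):ℝ) = (m:ℝ) + 2*k := by push_cast; ring
    rw [c1]
    ring
  rw [eL, Summable.tsum_eq_zero_add hP]
  have h00 : (-4*((0:ℕ):ℝ)*((m:ℝ)+1)) * bCoef m 0 * x^(m+2*0) = 0 := by
    norm_num
  rw [h00, zero_add]
  have keyshift : ∀ k : ℕ, (-4*(((k+1:ℕ)):ℝ)*((m:ℝ)+1)) * bCoef m (k+1) * x^(m+2*(k+1))
      = (1:ℝ) * bCoef m k * x^(m+2*k+2) + (-(k:ℝ)/((m:ℝ)+k+1)) * bCoef m k * x^(m+2*k+2) := by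
    intro k
    have hb := bCoef_succ m k
    have hp : m+2*(k+1) = m+2*k+2 := by omega
    have hd : ((m:ℝ)+k+1) ≠ 0 := by positivity
    rw [hp]
    push_cast
    field_simp
    linear_combination (-((m:ℝ)+1) * x^(m+2*k+2)) * hb
  rw [tsum_congr keyshift, Summable.tsum_add hB2 hQ]
  have eB : ∑' k : ℕ, (1:ℝ) * bCoef m k * x^(m+2*k+2) = x^2 * Jf m x := by
    rw [Jf, ← tsum_mul_left]
    apply tsum_congr
    intro k
    rw [pow_add]
    ring
  have eQ : ∑' k : ℕ, (-(k:ℝ)/((m:ℝ)+k+1)) * bCoef m k * x^(m+2*k+2) = x^2 * Jf (m+2) x := by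
    rw [Summable.tsum_eq_zero_add hQ]
    have hq0 : (-((0:ℕ):ℝ)/((m:ℝ)+(0:ℕ)+1)) * bCoef m 0 * x^(m+2*0+2) = 0 := by norm_num
    rw [hq0, zero_add, Jf, ← tsum_mul_left]
    apply tsum_congr
    intro k
    have hb1 := bCoef_succ m k
    have hs1 := bCoef_shift m k
    have hp1 : x^(m+2*(k+1)+2) = x^(m+2*k+4) := by
      have h : m+2*(k+1)+2 = m+2*k+4 := by omega
      rw [h]
    have hp2 : x^2 * x^(m+2+2*k) = x^(m+2*k+4) := by rw [← pow_add]; congr 1; omega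
    rw [hp1, show x^2 * (bCoef (m+2) k * x^(m+2+2*k)) =
      bCoef (m+2) k * (x^2 * x^(m+2+2*k)) by ring, hp2]
    have hd : ((m:ℝ)+(k+1:ℕ)+1) ≠ 0 := by positivity
    push_cast
    rw [div_mul_eq_mul_div, div_mul_eq_mul_div, div_eq_iff (by positivity : ((m:ℝ)+((k:ℝ)+1)+1) ≠ 0)]
    apply mul_left_cancel₀ (show (4*((m:ℝ)+(k:ℝ)+1)) ≠ 0 by positivity)
    linear_combination (-(x^(m+2*k+4))) * hb1 + (-(x^(m+2*k+4))) * hs1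
  rw [eB, eQ]


lemma bCoef_zero_pos (m : ℕ) : 0 < bCoef m 0 := by
  rw [bCoef]
  norm_num
  positivity

lemma abs_bCoef_le' (m k : ℕ) : |bCoef m k| ≤ bCoef m 0 * (1/4)^k := by
  have h1 : (0:ℝ) < 2^(m+2*k) * (Nat.factorial k) * (Nat.factorial (m+k)) := by positivity
  have habs : |bCoef m k| = 1 / (2^(m+2*k) * (Nat.factorial k) * (Nat.factorial (m+k))) := by
    rw [bCoef, abs_div, abs_pow, abs_neg, abs_one, one_pow, abs_of_pos h1]
  have hb0 : bCoef m 0 * (1/4)^k = 1 / (2^m * (Nat.factorial m) * 4^k) := by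
    rw [bCoef]
    norm_num
    rw [one_div, inv_pow]; ring
  have hsplit : ((2:ℝ))^(m+2*k) = 2^m * 4^k := by
    rw [pow_add, pow_mul]
    norm_num
  rw [habs, hb0, hsplit]
  have hk1 : (1:ℝ) ≤ (Nat.factorial k) := by
    exact_mod_cast Nat.one_le_iff_ne_zero.mpr (Nat.factorial_ne_zero _)
  have hmk : ((Nat.factorial m):ℝ) ≤ (Nat.factorial (m+k)) := by
    exact_mod_cast Nat.factorial_le (by omega)
  apply one_div_le_one_div_of_le (by positivity)
  calc ((2:ℝ))^m * (Nat.factorial m) * 4^k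
      = (2^m * 4^k * 1) * (Nat.factorial m) := by ring
    _ ≤ (2^m * 4^k * (Nat.factorial k)) * (Nat.factorial (m+k)) := by
        apply mul_le_mul _ hmk (by positivity) (by positivity)
        exact mul_le_mul_of_nonneg_left hk1 (by positivity)

lemma geom_quarter : ∑' k : ℕ, ((1:ℝ)/4)^(k+1) = 1/3 := by
  have h : ∀ k : ℕ, ((1:ℝ)/4)^(k+1) = (1/4) * (1/4)^k := by
    intro k
    rw [pow_succ]
    ring
  rw [tsum_congr h, tsum_mul_left, tsum_geometric_of_lt_one (by norm_num) (by norm_num)]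
  norm_num

lemma Jf_pos_small (m : ℕ) (hm : 1 ≤ m) (x : ℝ) (hx : 0 < x) (hx1 : x ≤ 1/2) :
    0 < Jf m x := by
  have hb0 := bCoef_zero_pos m
  have hsum := summable_Jf m x
  rw [Jf, Summable.tsum_eq_zero_add hsum]
  have hxm : bCoef m 0 * x^(m+2*0) = bCoef m 0 * x^m := by norm_num
  rw [hxm]
  set T := ∑' k : ℕ, bCoef m (k+1) * x^(m+2*(k+1)) with hT
  have hTsum : Summable (fun k : ℕ => bCoef m (k+1) * x^(m+2*(k+1))) := by
    have h := hsum.comp_injective (add_left_injective 1)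
    exact h.congr (fun k => rfl)
  have hx1' : x ≤ 1 := by linarith
  have hbound : ∀ k : ℕ, ‖bCoef m (k+1) * x^(m+2*(k+1))‖
      ≤ bCoef m 0 * x^(m+2) * (1/4)^(k+1) := by
    intro k
    rw [norm_mul, Real.norm_eq_abs, Real.norm_eq_abs, abs_of_pos (pow_pos hx _)]
    calc |bCoef m (k+1)| * x^(m+2*(k+1))
        ≤ (bCoef m 0 * (1/4)^(k+1)) * x^(m+2) := by
          apply mul_le_mul (abs_bCoef_le' m (k+1)) _ (by positivity) (by positivity)
          exact pow_le_pow_of_le_one hx.le hx1' (by omega)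
      _ = bCoef m 0 * x^(m+2) * (1/4)^(k+1) := by ring
  have hgsum : Summable (fun k : ℕ => bCoef m 0 * x^(m+2) * (1/4)^(k+1)) := by
    have hg : Summable (fun k : ℕ => ((1:ℝ)/4)^k) :=
      summable_geometric_of_lt_one (by norm_num) (by norm_num)
    apply (hg.mul_left (bCoef m 0 * x^(m+2) * (1/4))).congr
    intro k
    rw [pow_succ]
    ring
  have hTbound : |T| ≤ bCoef m 0 * x^(m+2) * (1/3) := by
    calc |T| = ‖T‖ := by rw [Real.norm_eq_abs]
      _ ≤ ∑' k : ℕ, ‖bCoef m (k+1) * x^(m+2*(k+1))‖ :=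
          norm_tsum_le_tsum_norm (hTsum.abs.congr (fun k => by rw [Real.norm_eq_abs]))
      _ ≤ ∑' k : ℕ, bCoef m 0 * x^(m+2) * (1/4)^(k+1) := by
          apply Summable.tsum_le_tsum hbound _ hgsum
          exact hTsum.abs.congr (fun k => by rw [Real.norm_eq_abs])
      _ = bCoef m 0 * x^(m+2) * (1/3) := by
          rw [tsum_mul_left, geom_quarter]
  have hxp : x^(m+2) = x^m * x^2 := by rw [pow_add]
  have hxmp : (0:ℝ) < x^m := pow_pos hx m
  have habs := abs_le.mp hTbound
  rw [hxp] at habs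
  have hx2 : x^2 ≤ 1/4 := by nlinarith
  have h5 : bCoef m 0 * (x^m * x^2) * (1/3) ≤ bCoef m 0 * x^m * (1/12) := by
    nlinarith [mul_pos hb0 hxmp]
  have h6 := habs.1
  nlinarith [mul_pos hb0 hxmp]

lemma geom_half : ∑' k : ℕ, ((1:ℝ)/2)^(k+1) = 1 := by
  have h : ∀ k : ℕ, ((1:ℝ)/2)^(k+1) = (1/2) * (1/2)^k := by
    intro k
    rw [pow_succ]
    ring
  rw [tsum_congr h, tsum_mul_left, tsum_geometric_of_lt_one (by norm_num) (by norm_num)]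
  norm_num

lemma D1f_pos_small (m : ℕ) (hm : 1 ≤ m) (x : ℝ) (hx : 0 < x) (hx1 : x ≤ 1/2) :
    0 < D1f m x := by
  have hb0 := bCoef_zero_pos m
  have hsum := summable_D1f m x
  rw [D1f, Summable.tsum_eq_zero_add hsum]
  set T := ∑' k : ℕ, bCoef m (k+1) * ((m+2*(k+1):ℕ):ℝ) * x^(m+2*(k+1)-1) with hT
  have hTsum : Summable (fun k : ℕ => bCoef m (k+1) * ((m+2*(k+1):ℕ):ℝ) * x^(m+2*(k+1)-1)) := by
    have h := hsum.comp_injective (add_left_injective 1)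
    exact h.congr (fun k => rfl)
  have hx1' : x ≤ 1 := by linarith
  have hbound : ∀ k : ℕ, ‖bCoef m (k+1) * ((m+2*(k+1):ℕ):ℝ) * x^(m+2*(k+1)-1)‖
      ≤ bCoef m 0 * ((m:ℝ)+2) * x^(m+1) * (1/2)^(k+1) := by
    intro k
    rw [norm_mul, norm_mul, Real.norm_eq_abs, Real.norm_eq_abs, Real.norm_eq_abs,
      abs_of_pos (pow_pos hx _), abs_of_nonneg (show (0:ℝ) ≤ ((m+2*(k+1):ℕ):ℝ) from Nat.cast_nonneg _)]
    have h1 : |bCoef m (k+1)| ≤ bCoef m 0 * (1/4)^(k+1) := abs_bCoef_le' m (k+1)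
    have h2 : ((m+2*(k+1):ℕ):ℝ) ≤ ((m:ℝ)+2) * 2^(k+1) := cast_le_pow2 m (k+1)
    have h3 : x^(m+2*(k+1)-1) ≤ x^(m+1) :=
      pow_le_pow_of_le_one hx.le hx1' (by omega)
    calc |bCoef m (k+1)| * ((m+2*(k+1):ℕ):ℝ) * x^(m+2*(k+1)-1)
        ≤ (bCoef m 0 * (1/4)^(k+1)) * (((m:ℝ)+2) * 2^(k+1)) * x^(m+1) := by
          apply mul_le_mul (mul_le_mul h1 h2 (by positivity) (by positivity)) h3
            (by positivity) (by positivity)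
      _ = bCoef m 0 * ((m:ℝ)+2) * x^(m+1) * ((1/4)^(k+1) * 2^(k+1)) := by ring
      _ = bCoef m 0 * ((m:ℝ)+2) * x^(m+1) * (1/2)^(k+1) := by
          rw [← mul_pow]
          norm_num
  have hgsum : Summable (fun k : ℕ => bCoef m 0 * ((m:ℝ)+2) * x^(m+1) * (1/2)^(k+1)) := by
    have hg : Summable (fun k : ℕ => ((1:ℝ)/2)^k) :=
      summable_geometric_of_lt_one (by norm_num) (by norm_num)
    apply (hg.mul_left (bCoef m 0 * ((m:ℝ)+2) * x^(m+1) * (1/2))).congr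
    intro k
    rw [pow_succ]
    ring
  have hTbound : |T| ≤ bCoef m 0 * ((m:ℝ)+2) * x^(m+1) := by
    calc |T| = ‖T‖ := by rw [Real.norm_eq_abs]
      _ ≤ ∑' k : ℕ, ‖bCoef m (k+1) * ((m+2*(k+1):ℕ):ℝ) * x^(m+2*(k+1)-1)‖ :=
          norm_tsum_le_tsum_norm (hTsum.abs.congr (fun k => by rw [Real.norm_eq_abs]))
      _ ≤ ∑' k : ℕ, bCoef m 0 * ((m:ℝ)+2) * x^(m+1) * (1/2)^(k+1) := by
          apply Summable.tsum_le_tsum hbound _ hgsum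
          exact hTsum.abs.congr (fun k => by rw [Real.norm_eq_abs])
      _ = bCoef m 0 * ((m:ℝ)+2) * x^(m+1) := by
          rw [tsum_mul_left, geom_half, mul_one]
  have h0 : bCoef m 0 * ((m+2*0:ℕ):ℝ) * x^(m+2*0-1) = bCoef m 0 * (m:ℝ) * x^(m-1) := by
    norm_num
  rw [h0]
  have hxp : x^(m+1) = x^(m-1) * x^2 := by
    rw [← pow_add]
    congr 1
    omega
  have hxmp : (0:ℝ) < x^(m-1) := pow_pos hx _
  have habs := abs_le.mp hTbound
  rw [hxp] at habs
  have hx2 : x^2 ≤ 1/4 := by nlinarith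
  have hm1 : (1:ℝ) ≤ (m:ℝ) := by exact_mod_cast hm
  have h6 := habs.1
  nlinarith [mul_pos hb0 hxmp, mul_pos (mul_pos hb0 hxmp) (show (0:ℝ) < (m:ℝ) by linarith)]

lemma Jf_D1f_pos (m : ℕ) (hm : 1 ≤ m) (x : ℝ) (hx : 0 < x) (hxm : x ≤ (m:ℝ)) :
    0 < Jf m x ∧ 0 < D1f m x := by
  have contJ : Continuous (Jf m) :=
    continuous_iff_continuousAt.mpr (fun y => (hasDerivAt_Jf m y).continuousAt)
  have contD : Continuous (D1f m) :=
    continuous_iff_continuousAt.mpr (fun y => (hasDerivAt_D1f m y).continuousAt)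
  have hm1 : (1:ℝ) ≤ (m:ℝ) := by exact_mod_cast hm
  by_cases hsmall : x ≤ 1/2
  · exact ⟨Jf_pos_small m hm x hx hsmall, D1f_pos_small m hm x hx hsmall⟩
  push_neg at hsmall
  -- bad set
  set B : Set ℝ := {y | y ∈ Set.Icc (1/2:ℝ) (m:ℝ) ∧ (Jf m y ≤ 0 ∨ D1f m y ≤ 0)} with hBdef
  have hBclosed : IsClosed B := by
    apply IsClosed.inter isClosed_Icc
    exact IsClosed.union (isClosed_le (contJ) continuous_const)
      (isClosed_le (contD) continuous_const)
  have hBbdd : BddBelow B := ⟨1/2, fun y hy => hy.1.1⟩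
  have hBempty : B = ∅ := by
    by_contra hne
    rw [← Ne, ← Set.nonempty_iff_ne_empty] at hne
    set z := sInf B with hz
    have hzB : z ∈ B := hBclosed.csInf_mem hne hBbdd
    have hzIcc := hzB.1
    have hhalf : 0 < (1/2:ℝ) := by norm_num
    have hhalf_pos : 0 < Jf m (1/2) ∧ 0 < D1f m (1/2) :=
      ⟨Jf_pos_small m hm (1/2) hhalf le_rfl, D1f_pos_small m hm (1/2) hhalf le_rfl⟩
    have hzne : (1/2:ℝ) < z := by
      rcases lt_or_eq_of_le hzIcc.1 with h | h
      · exact h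
      · exfalso
        rcases hzB.2 with h2 | h2 <;> rw [← h] at h2 <;> linarith [hhalf_pos.1, hhalf_pos.2]
    have hlow : ∀ y : ℝ, 1/2 ≤ y → y < z → 0 < Jf m y ∧ 0 < D1f m y := by
      intro y hy1 hy2
      by_contra hcon
      have hyB : y ∈ B := by
        constructor
        · exact ⟨hy1, le_trans hy2.le hzIcc.2⟩
        · push_neg at hcon
          by_cases hJy : 0 < Jf m y
          · right; linarith [hcon hJy]
          · left; linarith [not_lt.mp hJy]
      linarith [csInf_le hBbdd hyB]
    -- J positive on (0, z)
    have hJpos : ∀ y : ℝ, 0 < y → y < z → 0 < Jf m y := by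
      intro y hy1 hy2
      by_cases h : y ≤ 1/2
      · exact Jf_pos_small m hm y hy1 h
      · exact (hlow y (by linarith) hy2).1
    -- J is strictly monotone on [1/2, z], hence positive at z
    have hmono : StrictMonoOn (Jf m) (Set.Icc (1/2:ℝ) z) := by
      apply strictMonoOn_of_deriv_pos (convex_Icc _ _) (contJ.continuousOn)
      intro y hy
      rw [interior_Icc] at hy
      rw [(hasDerivAt_Jf m y).deriv]
      exact (hlow y hy.1.le hy.2).2
    have hJz : 0 < Jf m z := by
      have h12 : (1/2:ℝ) ∈ Set.Icc (1/2:ℝ) z := ⟨le_rfl, hzne.le⟩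
      have hzz : z ∈ Set.Icc (1/2:ℝ) z := ⟨hzne.le, le_rfl⟩
      have := hmono h12 hzz hzne
      linarith [hhalf_pos.1]
    -- the function y * D1f is monotone on [1/2, z]
    have hgderiv : ∀ y : ℝ, HasDerivAt (fun t => t * D1f m t) (D1f m y + y * D2f m y) y := by
      intro y
      have h : HasDerivAt (fun t => t * D1f m t) (1 * D1f m y + id y * D2f m y) y :=
        (hasDerivAt_id y).mul (hasDerivAt_D1f m y)
      simpa using h
    have hgmono : MonotoneOn (fun t => t * D1f m t) (Set.Icc (1/2:ℝ) z) := by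
      apply monotoneOn_of_deriv_nonneg (convex_Icc _ _)
      · exact (continuous_id.mul contD).continuousOn
      · intro y hy
        exact ((hgderiv y).differentiableAt).differentiableWithinAt
      · intro y hy
        rw [interior_Icc] at hy
        rw [(hgderiv y).deriv]
        have hy0 : (0:ℝ) < y := by linarith [hy.1]
        have hJy : 0 < Jf m y := hJpos y hy0 hy.2
        have hode := ode_identity m hm y
        have hyz : y ≤ (m:ℝ) := le_trans hy.2.le hzIcc.2
        have hfac : 0 ≤ ((m:ℝ)^2 - y^2) * Jf m y := by
          apply mul_nonneg _ hJy.le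
          nlinarith
        have hkey : y * (D1f m y + y * D2f m y) = ((m:ℝ)^2 - y^2) * Jf m y := by
          nlinarith [hode]
        nlinarith [hkey, hfac]
    have hDz : 0 < D1f m z := by
      have h12 : (1/2:ℝ) ∈ Set.Icc (1/2:ℝ) z := ⟨le_rfl, hzne.le⟩
      have hzz : z ∈ Set.Icc (1/2:ℝ) z := ⟨hzne.le, le_rfl⟩
      have hg := hgmono h12 hzz hzne.le
      have : (0:ℝ) < (1/2) * D1f m (1/2) := by
        apply mul_pos hhalf hhalf_pos.2
      have hgz : 0 < z * D1f m z := by linarith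
      by_contra hcon
      push_neg at hcon
      nlinarith [hgz, hzne]
    rcases hzB.2 with h2 | h2 <;> linarith
  -- conclude
  have hxB : x ∉ B := by rw [hBempty]; exact Set.notMem_empty x
  rw [hBdef] at hxB
  simp only [Set.mem_setOf_eq, Set.mem_Icc] at hxB
  push_neg at hxB
  have := hxB ⟨hsmall.le, hxm⟩
  exact ⟨this.1, this.2⟩

lemma besselJ_eq_Jf (m : ℕ) : besselJ m = Jf m := by
  funext x
  rw [besselJ, Jf]
  apply tsum_congr
  intro k
  rw [bCoef, div_pow]
  have h1 : ((2:ℝ))^(m+2*k) ≠ 0 := by positivity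
  have h2 : ((Nat.factorial k):ℝ) ≠ 0 := Nat.cast_ne_zero.mpr (Nat.factorial_ne_zero _)
  have h3 : ((Nat.factorial (m+k)):ℝ) ≠ 0 := Nat.cast_ne_zero.mpr (Nat.factorial_ne_zero _)
  push_cast
  rw [div_mul_eq_mul_div, ← mul_div_assoc, div_div, ← mul_assoc]

/-- for `m ≥ 1` and `0 < x ≤ m`,
`0 ≤ J_m'(x)/J_m(x) ≤ m/x − x/(2(m+1)) ≤ m/x`. -/
theorem besselJ_logderiv_bound (m : ℕ) (hm : 1 ≤ m) (x : ℝ) (hx : 0 < x)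
    (hxm : x ≤ m) :
    0 ≤ deriv (besselJ m) x / besselJ m x ∧
      deriv (besselJ m) x / besselJ m x ≤ (m : ℝ) / x - x / (2 * ((m : ℝ) + 1)) ∧
      (m : ℝ) / x - x / (2 * ((m : ℝ) + 1)) ≤ (m : ℝ) / x := by
  have hderiv : deriv (besselJ m) x = D1f m x := by
    rw [besselJ_eq_Jf]
    exact (hasDerivAt_Jf m x).deriv
  have hval : besselJ m x = Jf m x := by rw [besselJ_eq_Jf]
  obtain ⟨hJ, hD⟩ := Jf_D1f_pos m hm x hx hxm
  have hJ2 : 0 < Jf (m+2) x := by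
    have h2 : x ≤ ((m+2:ℕ):ℝ) := by push_cast; linarith
    exact (Jf_D1f_pos (m+2) (by omega) x hx h2).1
  rw [hderiv, hval]
  refine ⟨le_of_lt (div_pos hD hJ), ?_, ?_⟩
  · -- upper bound
    have hrec := recur_identity m hm x
    have hx2J2 : 0 ≤ x^2 * Jf (m+2) x := mul_nonneg (sq_nonneg x) hJ2.le
    have key : 2*((m:ℝ)+1) * (x * D1f m x) ≤ (2*((m:ℝ)+1)*(m:ℝ) - x^2) * Jf m x := by
      nlinarith [hrec, hx2J2]
    rw [div_le_iff₀ hJ]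
    have hrhs : ((m:ℝ)/x - x/(2*((m:ℝ)+1))) * Jf m x
        = ((2*((m:ℝ)+1)*(m:ℝ) - x^2) * Jf m x) / (2*((m:ℝ)+1)*x) := by
      field_simp
    rw [hrhs, le_div_iff₀ (by positivity)]
    nlinarith [key]
  · -- trivial bound
    have : 0 ≤ x / (2*((m:ℝ)+1)) := by positivity
    linarith
end
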